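/- N-fold composition theorem for MPC: let (U,G) be the one-step bifunction of an MPC subproblem with affine dynamics f_d, convex cost ℓ, and convex constraint g. Then for every N ≥ 1, the N-fold composite (U,G)^N satisfies (U,G)^N((u_{N-1},...,u_0,x_0), x_N) = inf over x_1,...,x_{N-1} of Σ_{i=0}^{N-1} [ℓ(x_i,u_i) + δ(x_{i+1} = f_d(x_i,u_i)) + δ(g(x_i,u_i) ≤ 0)], i.e. it is the bifunction representation of the N-horizon MPC optimization problem. -/

import Mathlib

open Classical

/-- The `N`-fold sequential (parameterized) composite of a one-step bifunction
`G : (U × X) × X → EReal`: `horizon G N u x₀ x_N` composes `G` with itself `N`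
times, using control `u i` at step `i`, starting from `x₀` and ending at `x_N`. -/
noncomputable def horizon {X U : Type*} (G : (U × X) × X → EReal) :
    ℕ → (ℕ → U) → X → X → EReal
  | 0, _, x0, xN => if xN = x0 then (0 : EReal) else ⊤
  | (N + 1), u, x0, xN => ⨅ y : X, horizon G N u x0 y + G ((u N, y), xN)

/-- forced trajectory -/
noncomputable def mpcTraj {X U : Type*} (fd : X × U → X) (u : ℕ → U) (x0 : X) : ℕ → X
  | 0 => x0
  | (N + 1) => fd (mpcTraj fd u x0 N, u N)

lemma ereal_sum_ne_bot {ι : Type*} (s : Finset ι) (f : ι → EReal)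
    (h : ∀ i ∈ s, f i ≠ ⊥) : s.sum f ≠ ⊥ := by
  classical
  induction s using Finset.induction_on with
  | empty => simp
  | @insert a s' hx ih =>
    rw [Finset.sum_insert hx]
    intro hb
    rcases EReal.add_eq_bot_iff.mp hb with h1 | h1
    · exact h a (Finset.mem_insert_self _ _) h1
    · exact ih (fun i hi => h i (Finset.mem_insert_of_mem hi)) h1

lemma ereal_sum_eq_top {ι : Type*} (s : Finset ι) (f : ι → EReal)
    (h : ∀ i ∈ s, f i ≠ ⊥) {j : ι} (hj : j ∈ s) (hjt : f j = ⊤) : s.sum f = ⊤ := by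
  classical
  rw [← Finset.add_sum_erase s f hj, hjt]
  exact EReal.top_add_of_ne_bot
    (ereal_sum_ne_bot _ _ (fun i hi => h i (Finset.mem_of_mem_erase hi)))

lemma horizon_closed {X U : Type*} [DecidableEq X] (fd : X × U → X) (c d : X × U → EReal)
    (hc : ∀ p, c p ≠ ⊥) (hd : ∀ p, d p ≠ ⊥) (u : ℕ → U) (x0 : X) :
    ∀ N xN, horizon (fun q : (U × X) × X =>
        c (q.1.2, q.1.1) + (if q.2 = fd (q.1.2, q.1.1) then (0 : EReal) else ⊤)
          + d (q.1.2, q.1.1)) N u x0 xN =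
      (∑ i : Fin N, (c (mpcTraj fd u x0 i, u i) + d (mpcTraj fd u x0 i, u i)))
        + (if xN = mpcTraj fd u x0 N then (0 : EReal) else ⊤) := by
  intro N
  induction N with
  | zero => intro xN; simp [horizon, mpcTraj]; congr 1
  | succ N ih =>
    intro xN
    have hterm : ∀ y, c (y, u N) + (if xN = fd (y, u N) then (0 : EReal) else ⊤)
        + d (y, u N) ≠ ⊥ := by
      intro y hb
      rcases EReal.add_eq_bot_iff.mp hb with h1 | h1
      · rcases EReal.add_eq_bot_iff.mp h1 with h2 | h2
        · exact hc _ h2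
        · split_ifs at h2 <;> simp_all
      · exact hd _ h1
    have hS : (∑ i : Fin N, (c (mpcTraj fd u x0 i, u i) + d (mpcTraj fd u x0 i, u i))) ≠ ⊥ := by
      apply ereal_sum_ne_bot
      intro i _ hb
      rcases EReal.add_eq_bot_iff.mp hb with h1 | h1
      · exact hc _ h1
      · exact hd _ h1
    have hsum : (∑ i : Fin (N+1), (c (mpcTraj fd u x0 i, u i) + d (mpcTraj fd u x0 i, u i)))
        = (∑ i : Fin N, (c (mpcTraj fd u x0 i, u i) + d (mpcTraj fd u x0 i, u i)))
          + (c (mpcTraj fd u x0 N, u N) + d (mpcTraj fd u x0 N, u N)) := by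
      rw [Fin.sum_univ_castSucc]
      simp
    have hT : mpcTraj fd u x0 (N+1) = fd (mpcTraj fd u x0 N, u N) := rfl
    have key : (∑ i : Fin N, (c (mpcTraj fd u x0 i, u i) + d (mpcTraj fd u x0 i, u i)))
          + (if (mpcTraj fd u x0 N : X) = mpcTraj fd u x0 N then (0:EReal) else ⊤)
          + (c (mpcTraj fd u x0 N, u N)
            + (if xN = fd (mpcTraj fd u x0 N, u N) then (0 : EReal) else ⊤)
            + d (mpcTraj fd u x0 N, u N))
        = (∑ i : Fin N, (c (mpcTraj fd u x0 i, u i) + d (mpcTraj fd u x0 i, u i)))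
          + (c (mpcTraj fd u x0 N, u N) + d (mpcTraj fd u x0 N, u N))
          + (if xN = mpcTraj fd u x0 (N+1) then (0:EReal) else ⊤) := by
      rw [if_pos rfl, add_zero, hT,
        add_right_comm (c (mpcTraj fd u x0 N, u N)) (if xN = fd (mpcTraj fd u x0 N, u N) then (0:EReal) else ⊤) (d (mpcTraj fd u x0 N, u N)),
        ← add_assoc]
    show (⨅ y : X, horizon _ N u x0 y + _) = _
    rw [hsum]
    apply le_antisymm
    · refine iInf_le_of_le (mpcTraj fd u x0 N) (le_of_eq ?_)
      rw [ih]
      exact key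
    · apply le_iInf
      intro y
      rw [ih]
      by_cases hy : y = mpcTraj fd u x0 N
      · subst hy
        exact le_of_eq key.symm
      · rw [if_neg hy, EReal.add_top_of_ne_bot hS,
          EReal.top_add_of_ne_bot (hterm y)]
        exact le_top

lemma rhs_closed {X U : Type*} [DecidableEq X] (fd : X × U → X) (c d : X × U → EReal)
    (hc : ∀ p, c p ≠ ⊥) (hd : ∀ p, d p ≠ ⊥) (N : ℕ) (u : ℕ → U) (x0 xN : X) :
    (⨅ xs : {f : Fin (N + 1) → X // f 0 = x0 ∧ f (Fin.last N) = xN},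
      ∑ i : Fin N, (c (xs.1 i.castSucc, u i)
        + (if xs.1 i.succ = fd (xs.1 i.castSucc, u i) then (0 : EReal) else ⊤)
        + d (xs.1 i.castSucc, u i)))
    = (∑ i : Fin N, (c (mpcTraj fd u x0 i, u i) + d (mpcTraj fd u x0 i, u i)))
        + (if xN = mpcTraj fd u x0 N then (0 : EReal) else ⊤) := by
  classical
  set T := mpcTraj fd u x0 with hTdef
  have hterm : ∀ (f : Fin (N+1) → X) (i : Fin N),
      c (f i.castSucc, u i) + (if f i.succ = fd (f i.castSucc, u i) then (0 : EReal) else ⊤)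
        + d (f i.castSucc, u i) ≠ ⊥ := by
    intro f i hb
    rcases EReal.add_eq_bot_iff.mp hb with h1 | h1
    · rcases EReal.add_eq_bot_iff.mp h1 with h2 | h2
      · exact hc _ h2
      · split_ifs at h2 <;> simp_all
    · exact hd _ h1
  have hS : (∑ i : Fin N, (c (T i, u i) + d (T i, u i))) ≠ ⊥ := by
    apply ereal_sum_ne_bot
    intro i _ hb
    rcases EReal.add_eq_bot_iff.mp hb with h1 | h1
    · exact hc _ h1
    · exact hd _ h1
  have htraj_sum : ∀ (f : Fin (N+1) → X), (∀ i : Fin (N+1), f i = T i) →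
      (∑ i : Fin N, (c (f i.castSucc, u i)
        + (if f i.succ = fd (f i.castSucc, u i) then (0 : EReal) else ⊤)
        + d (f i.castSucc, u i)))
      = ∑ i : Fin N, (c (T i, u i) + d (T i, u i)) := by
    intro f hf
    apply Finset.sum_congr rfl
    intro i _
    have h1 : f i.castSucc = T i := by rw [hf]; simp
    have h2 : f i.succ = T (i + 1 : ℕ) := by rw [hf]; simp
    have h3 : T ((i : ℕ) + 1) = fd (T i, u i) := rfl
    rw [h1, h2, if_pos h3, add_zero]
  apply le_antisymm
  · by_cases hx : xN = T N
    · have h0 : (fun i : Fin (N+1) => T (i : ℕ)) 0 = x0 := by simp [hTdef, mpcTraj]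
      have hlast : (fun i : Fin (N+1) => T (i : ℕ)) (Fin.last N) = xN := by
        simp [hx]
      refine iInf_le_of_le ⟨fun i : Fin (N+1) => T (i : ℕ), h0, hlast⟩ (le_of_eq ?_)
      rw [htraj_sum _ (fun i => rfl), if_pos hx, add_zero]
  
    · rw [if_neg hx, EReal.add_top_of_ne_bot hS]
      exact le_top
  · apply le_iInf
    rintro ⟨f, hf0, hflast⟩
    by_cases hall : ∀ i : Fin (N+1), f i = T i
    · have hx : xN = T N := by
        rw [← hflast, hall (Fin.last N)]; simp
      rw [htraj_sum f hall, if_pos hx, add_zero]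
    · push_neg at hall
      obtain ⟨i0, hi0⟩ := hall
      have hP : ∃ j, ∃ hj : j < N + 1, f ⟨j, hj⟩ ≠ T j := ⟨i0, i0.isLt, by simpa using hi0⟩
      obtain ⟨hj0lt, hj0ne⟩ := Nat.find_spec hP
      have hj0pos : Nat.find hP ≠ 0 := by
        intro h
        apply hj0ne
        have e : (⟨Nat.find hP, hj0lt⟩ : Fin (N+1)) = 0 := Fin.ext (by simp only [Fin.val_zero]; exact h)
        rw [e, hf0, h]
        rfl
      obtain ⟨l, hl⟩ := Nat.exists_eq_succ_of_ne_zero hj0pos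
      have hlN : l < N := by omega
      have hfl : f ⟨l, by omega⟩ = T l := by
        have := Nat.find_min hP (show l < Nat.find hP by omega)
        push_neg at this
        exact this (by omega)
      set i : Fin N := ⟨l, hlN⟩ with hidef
      have hcast : f i.castSucc = T l := hfl
      have hne : f i.succ ≠ fd (f i.castSucc, u i) := by
        have h1 : f i.succ = f ⟨l + 1, by omega⟩ := rfl
        have h2 : fd (f i.castSucc, u (i : ℕ)) = T (l + 1) := by
          rw [hcast]; rfl
        rw [h1, h2]
        have e : (⟨Nat.find hP, hj0lt⟩ : Fin (N+1)) = ⟨l + 1, by omega⟩ :=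
          Fin.ext (by exact hl)
        rw [e] at hj0ne
        have eT : T (Nat.find hP) = T (l + 1) := by rw [hl]
        rw [eT] at hj0ne
        exact hj0ne
      have htop : c (f i.castSucc, u i)
          + (if f i.succ = fd (f i.castSucc, u i) then (0 : EReal) else ⊤)
          + d (f i.castSucc, u i) = ⊤ := by
        rw [if_neg hne, EReal.add_top_of_ne_bot (hc _), EReal.top_add_of_ne_bot (hd _)]
      have : (∑ i : Fin N, (c (f i.castSucc, u i)
          + (if f i.succ = fd (f i.castSucc, u i) then (0 : EReal) else ⊤)
          + d (f i.castSucc, u i))) = ⊤ :=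
        ereal_sum_eq_top _ _ (fun i _ => hterm f i) (Finset.mem_univ i) htop
      rw [this]
      exact le_top

/-- N-fold composition theorem: the N-fold composite of the one-step MPC bifunction
(for affine dynamics, convex cost and convex constraints) is the bifunction
representation of the N-horizon MPC optimization problem. -/
theorem mpc_nfold_comp {n k m : ℕ}
    (fd : ((Fin n → ℝ) × (Fin k → ℝ)) →ᵃ[ℝ] (Fin n → ℝ))
    (ℓ : (Fin n → ℝ) × (Fin k → ℝ) → ℝ)
    (g : (Fin n → ℝ) × (Fin k → ℝ) → (Fin m → ℝ))
    (hℓ : ConvexOn ℝ Set.univ ℓ)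
    (hg : ∀ i, ConvexOn ℝ Set.univ (fun p => g p i))
    (N : ℕ) (hN : 1 ≤ N) (u : ℕ → (Fin k → ℝ)) (x0 xN : Fin n → ℝ) :
    horizon (fun q : ((Fin k → ℝ) × (Fin n → ℝ)) × (Fin n → ℝ) =>
        ((ℓ (q.1.2, q.1.1) : EReal))
          + (if q.2 = fd (q.1.2, q.1.1) then (0 : EReal) else ⊤)
          + (if g (q.1.2, q.1.1) ≤ 0 then (0 : EReal) else ⊤)) N u x0 xN =
    ⨅ xs : {f : Fin (N + 1) → (Fin n → ℝ) // f 0 = x0 ∧ f (Fin.last N) = xN},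
      ∑ i : Fin N,
        (((ℓ (xs.1 i.castSucc, u i) : EReal))
          + (if xs.1 i.succ = fd (xs.1 i.castSucc, u i) then (0 : EReal) else ⊤)
          + (if g (xs.1 i.castSucc, u i) ≤ 0 then (0 : EReal) else ⊤)) := by
  have hc : ∀ p : (Fin n → ℝ) × (Fin k → ℝ), ((ℓ p : EReal)) ≠ ⊥ := fun p => EReal.coe_ne_bot _
  have hd : ∀ p : (Fin n → ℝ) × (Fin k → ℝ),
      (if g p ≤ 0 then (0 : EReal) else ⊤) ≠ ⊥ := by
    intro p; split_ifs <;> simp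
  exact (horizon_closed (fun p => fd p) (fun p => ((ℓ p : EReal)))
      (fun p => if g p ≤ 0 then (0 : EReal) else ⊤) hc hd u x0 N xN).trans
    (rhs_closed (fun p => fd p) (fun p => ((ℓ p : EReal)))
      (fun p => if g p ≤ 0 then (0 : EReal) else ⊤) hc hd N u x0 xN).symm
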